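/- The closed unit ball of any infinite-dimensional L¹ space is not LNC: given disjoint positive-measure sets A_n, the functions x with x = μ(A_n)⁻¹2⁻ⁿ on A_n, x' = μ(A₁)⁻¹ on A₁ and 0 elsewhere, and x_k equal to x on A_n for n < k, equal to μ(A_k)⁻¹2^(1-k) on A_k, and 0 for n > k, satisfy x_k → x in L¹ norm but ‖x_k + (x'-x)/2‖₁ = 1 + 2⁻ᵏ > 1 for all k. -/

import Mathlib

open Set Filter Topology MeasureTheory
open scoped ENNReal NNReal

set_option linter.unusedSectionVars false


/-- Locally nonconical (LNC). -/
def LNC {X : Type*} [AddCommGroup X] [Module ℝ X] [TopologicalSpace X] (Q : Set X) : Prop :=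
  ∀ x ∈ Q, ∀ x' ∈ Q,
    ∃ U, U ⊆ Q ∧ U ∈ nhdsWithin x Q ∧ ∀ u ∈ U, u + (2⁻¹ : ℝ) • (x' - x) ∈ Q

section Aux

variable {Ω : Type*} [MeasurableSpace Ω] (μ : Measure Ω) (A : ℕ → Set Ω)

/-- The "layered" function with coefficients `c`. -/
noncomputable def lncF (c : ℕ → ℝ) : Ω → ℝ :=
  fun ω => ∑' n : ℕ, (A n).indicator (fun _ => ((μ (A n)).toReal)⁻¹ * c n) ω

variable {A}

lemma lnc_not_mem (hdisj : Pairwise (Function.onFun Disjoint A)) {m n : ℕ} {ω : Ω}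
    (hω : ω ∈ A m) (hn : n ≠ m) : ω ∉ A n :=
  fun h => Set.disjoint_left.mp (hdisj hn) h hω

lemma lncF_apply_mem (hdisj : Pairwise (Function.onFun Disjoint A)) (c : ℕ → ℝ) {m : ℕ} {ω : Ω}
    (hω : ω ∈ A m) : lncF μ A c ω = ((μ (A m)).toReal)⁻¹ * c m := by
  rw [lncF, tsum_eq_single m
    (fun n hn => Set.indicator_of_notMem (lnc_not_mem hdisj hω hn) _),
    Set.indicator_of_mem hω]

lemma lncF_apply_not_mem (c : ℕ → ℝ) {ω : Ω} (hω : ∀ n, ω ∉ A n) :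
    lncF μ A c ω = 0 := by
  have h : ∀ n : ℕ, (A n).indicator (fun _ => ((μ (A n)).toReal)⁻¹ * c n) ω = 0 :=
    fun n => Set.indicator_of_notMem (hω n) _
  rw [lncF]
  simp only [h, tsum_zero]

lemma lncF_comb (hdisj : Pairwise (Function.onFun Disjoint A)) (c d : ℕ → ℝ) (r : ℝ) (ω : Ω) :
    lncF μ A c ω + r * lncF μ A d ω = lncF μ A (fun n => c n + r * d n) ω := by
  by_cases h : ∃ m, ω ∈ A m
  · obtain ⟨m, hm⟩ := h
    rw [lncF_apply_mem μ hdisj c hm, lncF_apply_mem μ hdisj d hm, lncF_apply_mem μ hdisj _ hm]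
    ring
  · push_neg at h
    rw [lncF_apply_not_mem μ c h, lncF_apply_not_mem μ d h, lncF_apply_not_mem μ _ h]
    ring

lemma lncF_abs (hdisj : Pairwise (Function.onFun Disjoint A)) (c : ℕ → ℝ) (ω : Ω) :
    |lncF μ A c ω| = lncF μ A (fun n => |c n|) ω := by
  by_cases h : ∃ m, ω ∈ A m
  · obtain ⟨m, hm⟩ := h
    rw [lncF_apply_mem μ hdisj c hm, lncF_apply_mem μ hdisj _ hm, abs_mul,
      abs_of_nonneg (inv_nonneg.mpr ENNReal.toReal_nonneg)]
  · push_neg at h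
    rw [lncF_apply_not_mem μ c h, lncF_apply_not_mem μ _ h, abs_zero]

lemma lncF_hasSum (hdisj : Pairwise (Function.onFun Disjoint A)) (c : ℕ → ℝ) (ω : Ω) :
    HasSum (fun n => (A n).indicator (fun _ => ((μ (A n)).toReal)⁻¹ * c n) ω)
      (lncF μ A c ω) := by
  by_cases h : ∃ m, ω ∈ A m
  · obtain ⟨m, hm⟩ := h
    have h1 := hasSum_single (f := fun n => (A n).indicator
        (fun _ => ((μ (A n)).toReal)⁻¹ * c n) ω) m
      (fun n hn => Set.indicator_of_notMem (lnc_not_mem hdisj hm hn) _)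
    simpa [Set.indicator_of_mem hm, lncF_apply_mem μ hdisj c hm] using h1
  · push_neg at h
    have h0 : ∀ n : ℕ, (A n).indicator (fun _ => ((μ (A n)).toReal)⁻¹ * c n) ω = 0 :=
      fun n => Set.indicator_of_notMem (h n) _
    rw [lncF_apply_not_mem μ c h]
    simp only [h0]
    exact hasSum_zero

lemma lncF_measurable (hdisj : Pairwise (Function.onFun Disjoint A))
    (hA : ∀ n, MeasurableSet (A n)) (c : ℕ → ℝ) :
    Measurable (lncF μ A c) := by
  apply measurable_of_tendsto_metrizable
    (f := fun k ω => ∑ n ∈ Finset.range k,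
      (A n).indicator (fun _ => ((μ (A n)).toReal)⁻¹ * c n) ω)
    (fun k => Finset.measurable_sum _ fun n _ => measurable_const.indicator (hA n))
  rw [tendsto_pi_nhds]
  exact fun ω => (lncF_hasSum μ hdisj c ω).tendsto_sum_nat

lemma lnc_lintegral (hA : ∀ n, MeasurableSet (A n)) (hpos : ∀ n, 0 < μ (A n))
    (hfin : ∀ n, μ (A n) < ⊤) (c : ℕ → ℝ) (n : ℕ) :
    ∫⁻ ω, ‖(A n).indicator (fun _ => ((μ (A n)).toReal)⁻¹ * c n) ω‖₊ ∂μ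
      = ENNReal.ofReal |c n| := by
  have h1 : ∀ ω, ((‖(A n).indicator (fun _ => ((μ (A n)).toReal)⁻¹ * c n) ω‖₊ : ℝ≥0∞))
      = (A n).indicator (fun _ => (‖((μ (A n)).toReal)⁻¹ * c n‖₊ : ℝ≥0∞)) ω := by
    intro ω; by_cases h : ω ∈ A n <;> simp [h]
  simp_rw [h1]
  rw [lintegral_indicator_const (hA n), ← ENNReal.ofReal_coe_nnreal, coe_nnnorm, Real.norm_eq_abs, abs_mul,
    abs_of_nonneg (inv_nonneg.mpr ENNReal.toReal_nonneg),
    ENNReal.ofReal_mul (inv_nonneg.mpr ENNReal.toReal_nonneg),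
    ENNReal.ofReal_inv_of_pos (ENNReal.toReal_pos (hpos n).ne' (hfin n).ne),
    ENNReal.ofReal_toReal (hfin n).ne, mul_comm ((μ (A n))⁻¹) _, mul_assoc,
    ENNReal.inv_mul_cancel (hpos n).ne' (hfin n).ne, mul_one]

lemma lnc_tsum_lintegral (hA : ∀ n, MeasurableSet (A n)) (hpos : ∀ n, 0 < μ (A n))
    (hfin : ∀ n, μ (A n) < ⊤) (c : ℕ → ℝ) (hc : Summable fun n => |c n|) :
    ∑' n, ∫⁻ ω, ‖(A n).indicator (fun _ => ((μ (A n)).toReal)⁻¹ * c n) ω‖₊ ∂μ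
      = ENNReal.ofReal (∑' n, |c n|) := by
  simp_rw [lnc_lintegral μ hA hpos hfin c]
  exact (ENNReal.ofReal_tsum_of_nonneg (fun n => abs_nonneg _) hc).symm

lemma lncF_integrable (hdisj : Pairwise (Function.onFun Disjoint A))
    (hA : ∀ n, MeasurableSet (A n)) (hpos : ∀ n, 0 < μ (A n))
    (hfin : ∀ n, μ (A n) < ⊤) (c : ℕ → ℝ) (hc : Summable fun n => |c n|) :
    Integrable (lncF μ A c) μ := by
  refine ⟨(lncF_measurable μ hdisj hA c).aestronglyMeasurable, ?_⟩
  rw [hasFiniteIntegral_def]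
  calc ∫⁻ ω, ‖lncF μ A c ω‖₊ ∂μ
      ≤ ∫⁻ ω, ∑' n, (‖(A n).indicator (fun _ => ((μ (A n)).toReal)⁻¹ * c n) ω‖₊ : ℝ≥0∞) ∂μ := by
        apply lintegral_mono
        intro ω
        dsimp only
        by_cases h : ∃ m, ω ∈ A m
        · obtain ⟨m, hm⟩ := h
          refine le_trans (le_of_eq ?_) (ENNReal.le_tsum m)
          congr 1
          rw [lncF_apply_mem μ hdisj c hm, Set.indicator_of_mem hm]
        · push_neg at h
          rw [lncF_apply_not_mem μ c h]
          simp
    _ = ∑' n, ∫⁻ ω, ‖(A n).indicator (fun _ => ((μ (A n)).toReal)⁻¹ * c n) ω‖₊ ∂μ :=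
        lintegral_tsum fun n => ((measurable_const.indicator (hA n)).nnnorm.coe_nnreal_ennreal).aemeasurable
    _ = ENNReal.ofReal (∑' n, |c n|) := lnc_tsum_lintegral μ hA hpos hfin c hc
    _ < ⊤ := ENNReal.ofReal_lt_top

lemma lncF_integral (hdisj : Pairwise (Function.onFun Disjoint A))
    (hA : ∀ n, MeasurableSet (A n)) (hpos : ∀ n, 0 < μ (A n))
    (hfin : ∀ n, μ (A n) < ⊤) (c : ℕ → ℝ) (hc : Summable fun n => |c n|) :
    ∫ ω, |lncF μ A c ω| ∂μ = ∑' n, |c n| := by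
  have h1 : ∀ ω, |lncF μ A c ω| = lncF μ A (fun n => |c n|) ω := lncF_abs μ hdisj c
  simp_rw [h1]
  simp only [lncF]
  rw [integral_tsum (fun n => (measurable_const.indicator (hA n)).aestronglyMeasurable) ?_]
  · have h2 : ∀ n : ℕ,
        ∫ ω, (A n).indicator (fun _ => ((μ (A n)).toReal)⁻¹ * |c n|) ω ∂μ = |c n| := by
      intro n
      rw [integral_indicator_const _ (hA n), smul_eq_mul, ← mul_assoc, measureReal_def,
        mul_inv_cancel₀ (ENNReal.toReal_pos (hpos n).ne' (hfin n).ne).ne', one_mul]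
    simp_rw [h2]
  · refine ne_of_eq_of_ne (lnc_tsum_lintegral μ hA hpos hfin _ (by simpa [abs_abs] using hc)) ?_
    exact ENNReal.ofReal_ne_top


/-! ### Geometric series facts -/

lemma lnc_geo_sum (k : ℕ) : ∑ n ∈ Finset.range k, (2:ℝ)⁻¹ ^ (n+1) = 1 - (2:ℝ)⁻¹ ^ k := by
  induction k with
  | zero => simp
  | succ k ih => rw [Finset.sum_range_succ, ih]; ring

lemma lnc_geo_tsum : ∑' n : ℕ, (2:ℝ)⁻¹ ^ n = 2 := by
  rw [tsum_geometric_of_lt_one (by norm_num) (by norm_num)]; norm_num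

lemma lnc_geo_summable : Summable (fun n : ℕ => (2:ℝ)⁻¹ ^ n) :=
  summable_geometric_of_lt_one (by norm_num) (by norm_num)

lemma lnc_geo_shift_summable (j : ℕ) : Summable (fun n : ℕ => (2:ℝ)⁻¹ ^ (n + j)) := by
  simp_rw [pow_add]; exact lnc_geo_summable.mul_right _

lemma lnc_geo_shift (j : ℕ) : ∑' n : ℕ, (2:ℝ)⁻¹ ^ (n + j) = (2:ℝ)⁻¹ ^ j * 2 := by
  simp_rw [pow_add]
  rw [tsum_mul_right, lnc_geo_tsum, mul_comm]

/-! ### The coefficient sequences -/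

noncomputable def lncc : ℕ → ℝ := fun n => (2:ℝ)⁻¹ ^ (n+1)

noncomputable def lncc' : ℕ → ℝ := fun n => if n = 0 then 1 else 0

noncomputable def lncck (k : ℕ) : ℕ → ℝ := fun n =>
  if n < k then (2:ℝ)⁻¹ ^ (n+1) else if n = k then (2:ℝ)⁻¹ ^ k else 0

noncomputable def lncce (k : ℕ) : ℕ → ℝ := fun n => lncck k n + (-1) * lncc n

noncomputable def lnccy (k : ℕ) : ℕ → ℝ := fun n => lncck k n + 2⁻¹ * (lncc' n + (-1) * lncc n)

lemma lncc_summable : Summable lncc := lnc_geo_shift_summable 1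

lemma lncc'_summable : Summable lncc' := by
  apply summable_of_ne_finset_zero (s := {0})
  intro n hn
  have h : n ≠ 0 := by simpa using hn
  simp [lncc', h]

lemma lncck_summable (k : ℕ) : Summable (lncck k) := by
  apply summable_of_ne_finset_zero (s := Finset.range (k+1))
  intro n hn
  rw [Finset.mem_range, not_lt] at hn
  simp only [lncck]
  rw [if_neg (by omega), if_neg (by omega)]

lemma lncce_summable (k : ℕ) : Summable (lncce k) :=
  (lncck_summable k).add (lncc_summable.mul_left (-1))

lemma lnccy_summable (k : ℕ) : Summable (lnccy k) :=
  (lncck_summable k).add ((lncc'_summable.add (lncc_summable.mul_left (-1))).mul_left 2⁻¹)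

lemma lncc_abs : (fun n => |lncc n|) = lncc :=
  funext fun n => abs_of_nonneg (by simp only [lncc]; positivity)

lemma lncc_abs_summable : Summable (fun n => |lncc n|) := by rw [lncc_abs]; exact lncc_summable

lemma lncc_abs_tsum : ∑' n, |lncc n| = 1 := by
  rw [lncc_abs]
  have h := lnc_geo_shift 1
  have h2 : ∑' n, lncc n = ∑' n : ℕ, (2:ℝ)⁻¹ ^ (n + 1) := tsum_congr fun n => rfl
  rw [h2, h]; norm_num

lemma lncc'_abs_tsum : ∑' n, |lncc' n| = 1 := by
  rw [tsum_eq_single 0 (fun n hn => by simp [lncc', hn])]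
  simp [lncc']

lemma lncck_abs_tsum (k : ℕ) : ∑' n, |lncck k n| = 1 := by
  rw [tsum_eq_sum (s := Finset.range (k+1)) (fun n hn => by
    rw [Finset.mem_range, not_lt] at hn
    simp only [lncck]
    rw [if_neg (by omega), if_neg (by omega), abs_zero])]
  have habs : ∀ n ∈ Finset.range (k+1), |lncck k n| = lncck k n := fun n _ =>
    abs_of_nonneg (by simp only [lncck]; split <;> [positivity; (split <;> [positivity; rfl])])
  rw [Finset.sum_congr rfl habs, Finset.sum_range_succ,
    Finset.sum_congr rfl (fun n hn => show lncck k n = (2:ℝ)⁻¹ ^ (n+1) by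
      simp [lncck, Finset.mem_range.mp hn]),
    lnc_geo_sum]
  have h2 : lncck k k = (2:ℝ)⁻¹ ^ k := by simp [lncck]
  rw [h2]; ring

lemma lncce_abs_tsum (k : ℕ) : ∑' n, |lncce k n| = (2:ℝ)⁻¹ ^ k := by
  have hs : Summable (fun n => |lncce k n|) := (lncce_summable k).abs
  rw [← Summable.sum_add_tsum_nat_add k hs]
  have h0 : ∀ n ∈ Finset.range k, |lncce k n| = 0 := by
    intro n hn
    have hnk := Finset.mem_range.mp hn
    simp [lncce, lncck, lncc, hnk]
  rw [Finset.sum_congr rfl h0, Finset.sum_const_zero]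
  have h1 : ∀ n : ℕ, |lncce k (n + k)| = (2:ℝ)⁻¹ ^ (n + (k + 1)) := by
    intro n
    cases n with
    | zero =>
      have hv : lncce k (0 + k) = (2:ℝ)⁻¹ ^ (k+1) := by
        simp only [lncce, lncck, lncc]
        rw [if_neg (by omega : ¬ 0 + k < k), if_pos (Nat.zero_add k), Nat.zero_add]
        ring
      rw [hv, abs_of_nonneg (by positivity)]
      norm_num
    | succ m =>
      have hv : lncce k (m + 1 + k) = -((2:ℝ)⁻¹ ^ (m + 1 + (k + 1))) := by
        simp only [lncce, lncck, lncc]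
        rw [if_neg (by omega), if_neg (by omega)]
        ring_nf
      rw [hv, abs_neg, abs_of_nonneg (by positivity)]
  rw [tsum_congr h1, lnc_geo_shift]
  ring

lemma lnccy_abs_tsum (k : ℕ) : ∑' n, |lnccy k n| = 1 + (2:ℝ)⁻¹ ^ (k+1) := by
  have hs : Summable (fun n => |lnccy k n|) := (lnccy_summable k).abs
  rw [← Summable.sum_add_tsum_nat_add (k+1) hs]
  have htail : ∀ n : ℕ, |lnccy k (n + (k + 1))| = (2:ℝ)⁻¹ ^ (n + (k + 3)) := by
    intro n
    have hv : lnccy k (n + (k+1)) = -((2:ℝ)⁻¹ ^ (n + (k + 3))) := by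
      simp only [lnccy, lncck, lncc, lncc']
      rw [if_neg (by omega), if_neg (by omega), if_neg (by omega)]
      ring_nf
    rw [hv, abs_neg, abs_of_nonneg (by positivity)]
  have hfin : ∀ n ∈ Finset.range (k+1), |lnccy k n| =
      (2:ℝ)⁻¹ ^ (n+2) + (if n = 0 then (2:ℝ)⁻¹ else 0)
        + (if n = k then (2:ℝ)⁻¹ ^ (k+1) else 0) := by
    intro n hn
    have hnk : n < k + 1 := Finset.mem_range.mp hn
    by_cases h0 : n = 0
    · subst h0
      by_cases hk : k = 0
      · subst hk
        have hv : lnccy 0 0 = (5:ℝ)/4 := by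
          simp only [lnccy, lncck, lncc, lncc']
          norm_num
        rw [hv]
        norm_num
      · have hv : lnccy k 0 = (3:ℝ)/4 := by
          simp only [lnccy, lncck, lncc, lncc']
          rw [if_pos (show 0 < k by omega)]
          norm_num
        have hzk : (0:ℕ) ≠ k := fun h => hk h.symm
        rw [hv, if_pos rfl, if_neg hzk]
        norm_num
    · by_cases hk : n = k
      · subst hk
        have hv : lnccy n n = (2:ℝ)⁻¹ ^ (n+2) + (2:ℝ)⁻¹ ^ (n+1) := by
          simp only [lnccy, lncck, lncc, lncc', lt_irrefl, if_false, eq_self_iff_true, if_true,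
            if_neg h0]
          ring
        rw [hv, abs_of_nonneg (by positivity), if_neg h0, if_pos rfl]
        ring
      · have hv : lnccy k n = (2:ℝ)⁻¹ ^ (n+2) := by
          simp only [lnccy, lncck, lncc, lncc']
          rw [if_pos (by omega), if_neg h0]
          ring
        rw [hv, abs_of_nonneg (by positivity), if_neg h0, if_neg hk]
        ring
  rw [tsum_congr htail, lnc_geo_shift, Finset.sum_congr rfl hfin, Finset.sum_add_distrib,
    Finset.sum_add_distrib, Finset.sum_ite_eq' (Finset.range (k+1)) 0 (fun _ => (2:ℝ)⁻¹),
    Finset.sum_ite_eq' (Finset.range (k+1)) k (fun _ => (2:ℝ)⁻¹ ^ (k+1)),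
    if_pos (Finset.mem_range.mpr (by omega)), if_pos (Finset.mem_range.mpr (by omega))]
  have hsum2 : ∑ n ∈ Finset.range (k+1), (2:ℝ)⁻¹ ^ (n+2)
      = (1 - (2:ℝ)⁻¹ ^ (k+1)) * 2⁻¹ := by
    rw [← lnc_geo_sum (k+1), Finset.sum_mul]
    exact Finset.sum_congr rfl fun n _ => by ring
  rw [hsum2]
  ring


end Aux
theorem unitBall_L1_not_lnc {Ω : Type*} [MeasurableSpace Ω] (μ : Measure Ω)
    (A : ℕ → Set Ω) (hA : ∀ n, MeasurableSet (A n))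
    (hdisj : Pairwise (Function.onFun Disjoint A))
    (hpos : ∀ n, 0 < μ (A n)) (hfin : ∀ n, μ (A n) < ⊤) :
    let x : Ω → ℝ := fun ω =>
      ∑' n : ℕ, (A n).indicator (fun _ => ((μ (A n)).toReal)⁻¹ * (2 : ℝ)⁻¹ ^ (n + 1)) ω
    let x' : Ω → ℝ := (A 0).indicator fun _ => ((μ (A 0)).toReal)⁻¹
    let xk : ℕ → Ω → ℝ := fun k ω =>
      (∑ n ∈ Finset.range k,
          (A n).indicator (fun _ => ((μ (A n)).toReal)⁻¹ * (2 : ℝ)⁻¹ ^ (n + 1)) ω) +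
        (A k).indicator (fun _ => ((μ (A k)).toReal)⁻¹ * (2 : ℝ)⁻¹ ^ k) ω
    Integrable x μ ∧ Integrable x' μ ∧ (∀ k, Integrable (xk k) μ) ∧
    (∫ ω, |x ω| ∂μ) = 1 ∧ (∫ ω, |x' ω| ∂μ) = 1 ∧ (∀ k, (∫ ω, |xk k ω| ∂μ) = 1) ∧
    Tendsto (fun k => ∫ ω, |xk k ω - x ω| ∂μ) atTop (𝓝 0) ∧
    (∀ k, (∫ ω, |xk k ω + (x' ω - x ω) / 2| ∂μ) = 1 + (2 : ℝ)⁻¹ ^ (k + 1)) ∧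
    ¬ LNC {f : Lp ℝ 1 μ | ‖f‖ ≤ 1} := by
  intro x x' xk
  -- pointwise identification with `lncF`
  have hxe : x = lncF μ A lncc := rfl
  have hx'e : x' = lncF μ A lncc' := by
    funext ω
    by_cases h : ∃ m, ω ∈ A m
    · obtain ⟨m, hm⟩ := h
      rw [lncF_apply_mem μ hdisj lncc' hm]
      by_cases h0 : m = 0
      · subst h0
        rw [show x' ω = ((μ (A 0)).toReal)⁻¹ from Set.indicator_of_mem hm _]
        simp [lncc']
      · rw [show x' ω = 0 from Set.indicator_of_notMem
          (lnc_not_mem hdisj hm (Ne.symm h0)) _]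
        simp [lncc', h0]
    · push_neg at h
      rw [lncF_apply_not_mem μ lncc' h]
      exact Set.indicator_of_notMem (h 0) _
  have hxke : ∀ k, xk k = lncF μ A (lncck k) := by
    intro k
    funext ω
    by_cases h : ∃ m, ω ∈ A m
    · obtain ⟨m, hm⟩ := h
      rw [lncF_apply_mem μ hdisj (lncck k) hm]
      show (∑ n ∈ Finset.range k,
          (A n).indicator (fun _ => ((μ (A n)).toReal)⁻¹ * (2 : ℝ)⁻¹ ^ (n + 1)) ω) +
          (A k).indicator (fun _ => ((μ (A k)).toReal)⁻¹ * (2 : ℝ)⁻¹ ^ k) ω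
        = ((μ (A m)).toReal)⁻¹ * lncck k m
      rcases lt_trichotomy m k with hmk | hmk | hmk
      · rw [Finset.sum_eq_single_of_mem m (Finset.mem_range.mpr hmk)
          (fun n _ hn => Set.indicator_of_notMem (lnc_not_mem hdisj hm hn) _),
          Set.indicator_of_mem hm,
          Set.indicator_of_notMem (lnc_not_mem hdisj hm (by omega : k ≠ m)) _]
        simp only [lncck, if_pos hmk]
        ring
      · subst hmk
        rw [Finset.sum_eq_zero (fun n hn => Set.indicator_of_notMem
            (lnc_not_mem hdisj hm (by have := Finset.mem_range.mp hn; omega : n ≠ m)) _),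
          Set.indicator_of_mem hm]
        have hv : lncck m m = (2:ℝ)⁻¹ ^ m := by
          simp only [lncck]
          rw [if_neg (lt_irrefl m)]
          simp
        rw [hv]
        ring
      · rw [Finset.sum_eq_zero (fun n hn => Set.indicator_of_notMem
            (lnc_not_mem hdisj hm (by have := Finset.mem_range.mp hn; omega : n ≠ m)) _),
          Set.indicator_of_notMem (lnc_not_mem hdisj hm (by omega : k ≠ m)) _]
        have hv : lncck k m = 0 := by
          simp only [lncck]
          rw [if_neg (by omega), if_neg (by omega)]
        rw [hv]
        ring
    · push_neg at h
      rw [lncF_apply_not_mem μ (lncck k) h]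
      show (∑ n ∈ Finset.range k,
          (A n).indicator (fun _ => ((μ (A n)).toReal)⁻¹ * (2 : ℝ)⁻¹ ^ (n + 1)) ω) +
          (A k).indicator (fun _ => ((μ (A k)).toReal)⁻¹ * (2 : ℝ)⁻¹ ^ k) ω = 0
      rw [Finset.sum_eq_zero (fun n _ => Set.indicator_of_notMem (h n) _),
        Set.indicator_of_notMem (h k) _, add_zero]
  -- summability of the absolute coefficients
  have hac : Summable (fun n => |lncc n|) := lncc_abs_summable
  have hac' : Summable (fun n => |lncc' n|) := lncc'_summable.abs
  have hack : ∀ k, Summable (fun n => |lncck k n|) := fun k => (lncck_summable k).abs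
  have hace : ∀ k, Summable (fun n => |lncce k n|) := fun k => (lncce_summable k).abs
  have hacy : ∀ k, Summable (fun n => |lnccy k n|) := fun k => (lnccy_summable k).abs
  -- integrability
  have hIx : Integrable x μ := by
    rw [hxe]; exact lncF_integrable μ hdisj hA hpos hfin _ hac
  have hIx' : Integrable x' μ := by
    rw [hx'e]; exact lncF_integrable μ hdisj hA hpos hfin _ hac'
  have hIxk : ∀ k, Integrable (xk k) μ := by
    intro k; rw [hxke k]; exact lncF_integrable μ hdisj hA hpos hfin _ (hack k)
  -- integrals
  have hNx : (∫ ω, |x ω| ∂μ) = 1 := by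
    rw [hxe, lncF_integral μ hdisj hA hpos hfin _ hac, lncc_abs_tsum]
  have hNx' : (∫ ω, |x' ω| ∂μ) = 1 := by
    rw [hx'e, lncF_integral μ hdisj hA hpos hfin _ hac', lncc'_abs_tsum]
  have hNxk : ∀ k, (∫ ω, |xk k ω| ∂μ) = 1 := by
    intro k
    rw [hxke k, lncF_integral μ hdisj hA hpos hfin _ (hack k), lncck_abs_tsum]
  -- the difference
  have hsubpt : ∀ k ω, xk k ω - x ω = lncF μ A (lncce k) ω := by
    intro k ω
    rw [hxke k, hxe]
    have h := lncF_comb μ hdisj (lncck k) lncc (-1) ω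
    calc lncF μ A (lncck k) ω - lncF μ A lncc ω
        = lncF μ A (lncck k) ω + (-1) * lncF μ A lncc ω := by ring
      _ = lncF μ A (fun n => lncck k n + (-1) * lncc n) ω := h
      _ = lncF μ A (lncce k) ω := rfl
  have hsubint : ∀ k, (∫ ω, |xk k ω - x ω| ∂μ) = (2:ℝ)⁻¹ ^ k := by
    intro k
    have h := integral_congr_ae (μ := μ)
      (Eventually.of_forall fun ω => congrArg abs (hsubpt k ω))
    rw [h, lncF_integral μ hdisj hA hpos hfin _ (hace k), lncce_abs_tsum]
  have h7 : Tendsto (fun k => ∫ ω, |xk k ω - x ω| ∂μ) atTop (𝓝 0) := by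
    have he : (fun k => ∫ ω, |xk k ω - x ω| ∂μ) = fun k => (2:ℝ)⁻¹ ^ k := funext hsubint
    rw [he]
    exact tendsto_pow_atTop_nhds_zero_of_lt_one (by norm_num) (by norm_num)
  -- the shifted function
  have hypt : ∀ k ω, xk k ω + (x' ω - x ω) / 2 = lncF μ A (lnccy k) ω := by
    intro k ω
    rw [hxke k, hx'e, hxe]
    have h1 := lncF_comb μ hdisj lncc' lncc (-1) ω
    have h2 := lncF_comb μ hdisj (lncck k) (fun n => lncc' n + (-1) * lncc n) 2⁻¹ ω
    calc lncF μ A (lncck k) ω + (lncF μ A lncc' ω - lncF μ A lncc ω) / 2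
        = lncF μ A (lncck k) ω + 2⁻¹ * (lncF μ A lncc' ω + (-1) * lncF μ A lncc ω) := by
          ring
      _ = lncF μ A (lncck k) ω + 2⁻¹ * lncF μ A (fun n => lncc' n + (-1) * lncc n) ω := by
          rw [h1]
      _ = lncF μ A (fun n => lncck k n + 2⁻¹ * (lncc' n + (-1) * lncc n)) ω := h2
      _ = lncF μ A (lnccy k) ω := rfl
  have h8 : ∀ k, (∫ ω, |xk k ω + (x' ω - x ω) / 2| ∂μ) = 1 + (2:ℝ)⁻¹ ^ (k + 1) := by
    intro k
    have h := integral_congr_ae (μ := μ)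
      (Eventually.of_forall fun ω => congrArg abs (hypt k ω))
    rw [h, lncF_integral μ hdisj hA hpos hfin _ (hacy k), lnccy_abs_tsum]
  refine ⟨hIx, hIx', hIxk, hNx, hNx', hNxk, h7, h8, ?_⟩
  -- not LNC
  intro hLNC
  have hXQ : hIx.toL1 x ∈ {f : Lp ℝ 1 μ | ‖f‖ ≤ 1} := by
    rw [Set.mem_setOf_eq, L1.norm_of_fun_eq_integral_norm]
    simp only [Real.norm_eq_abs]
    rw [hNx]
  have hX'Q : hIx'.toL1 x' ∈ {f : Lp ℝ 1 μ | ‖f‖ ≤ 1} := by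
    rw [Set.mem_setOf_eq, L1.norm_of_fun_eq_integral_norm]
    simp only [Real.norm_eq_abs]
    rw [hNx']
  obtain ⟨U, hUQ, hUnhds, hU2⟩ := hLNC (hIx.toL1 x) hXQ (hIx'.toL1 x') hX'Q
  have htend : Tendsto (fun k => (hIxk k).toL1 (xk k)) atTop (𝓝 (hIx.toL1 x)) := by
    rw [tendsto_iff_dist_tendsto_zero]
    have hd : ∀ k, dist ((hIxk k).toL1 (xk k)) (hIx.toL1 x) = ∫ ω, |xk k ω - x ω| ∂μ := by
      intro k
      rw [dist_eq_norm, ← Integrable.toL1_sub _ _ (hIxk k) hIx,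
        L1.norm_of_fun_eq_integral_norm]
      simp only [Pi.sub_apply, Real.norm_eq_abs]
    have he : (fun k => dist ((hIxk k).toL1 (xk k)) (hIx.toL1 x))
        = fun k => ∫ ω, |xk k ω - x ω| ∂μ := funext hd
    rw [he]
    exact h7
  have htend' : Tendsto (fun k => (hIxk k).toL1 (xk k)) atTop
      (𝓝[{f : Lp ℝ 1 μ | ‖f‖ ≤ 1}] (hIx.toL1 x)) :=
    tendsto_nhdsWithin_of_tendsto_nhds_of_eventually_within _ htend
      (Eventually.of_forall fun k => by
        rw [Set.mem_setOf_eq, L1.norm_of_fun_eq_integral_norm]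
        simp only [Real.norm_eq_abs]
        rw [hNxk k])
  have hev : ∀ᶠ k in atTop, (hIxk k).toL1 (xk k) ∈ U := htend'.eventually_mem hUnhds
  obtain ⟨k, hk⟩ := hev.exists
  have hmem := hU2 ((hIxk k).toL1 (xk k)) hk
  have hH : Integrable (xk k + (2⁻¹:ℝ) • (x' - x)) μ := (hIxk k).add ((hIx'.sub hIx).smul _)
  have heq : (hIxk k).toL1 (xk k) + (2⁻¹ : ℝ) • (hIx'.toL1 x' - hIx.toL1 x)
      = hH.toL1 (xk k + (2⁻¹:ℝ) • (x' - x)) := by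
    rw [Integrable.toL1_add _ _ (hIxk k) ((hIx'.sub hIx).smul _),
      Integrable.toL1_smul' _ (hIx'.sub hIx), Integrable.toL1_sub]
  rw [Set.mem_setOf_eq] at hmem
  have hnn : ‖(hIxk k).toL1 (xk k) + (2⁻¹ : ℝ) • (hIx'.toL1 x' - hIx.toL1 x)‖
      = 1 + (2:ℝ)⁻¹ ^ (k + 1) := by
    rw [heq, L1.norm_of_fun_eq_integral_norm]
    have hpt : ∀ ω, ‖(xk k + (2⁻¹:ℝ) • (x' - x)) ω‖ = |xk k ω + (x' ω - x ω) / 2| := by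
      intro ω
      simp only [Pi.add_apply, Pi.smul_apply, Pi.sub_apply, smul_eq_mul, Real.norm_eq_abs]
      congr 1
      ring
    rw [integral_congr_ae (Eventually.of_forall hpt), h8 k]
  rw [hnn] at hmem
  have hp : (0:ℝ) < (2:ℝ)⁻¹ ^ (k + 1) := by positivity
  linarith
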